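/- The affine span of the set $\{\alpha\alpha^T : \alpha\in\{-1,+1\}^m\}$ inside the space of real symmetric $m\times m$ matrices is exactly the affine subspace of all real symmetric matrices with every diagonal entry equal to $1$; in particular its dimension is $m(m-1)/2$. -/

import Mathlib

open Matrix

variable {m : ℕ}

private def Fmat (p : {p : Fin m × Fin m // p.1 < p.2}) : Matrix (Fin m) (Fin m) ℝ :=
  Matrix.single p.1.1 p.1.2 1 + Matrix.single p.1.2 p.1.1 1

private lemma eval_sum (f : {p : Fin m × Fin m // p.1 < p.2} → ℝ) (a b : Fin m) :
    (∑ p, f p • Fmat p) a b =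
      if h : a < b then f ⟨(a,b), h⟩ else if h' : b < a then f ⟨(b,a), h'⟩ else 0 := by
  rw [Matrix.sum_apply]
  rcases lt_trichotomy a b with h | h | h
  · rw [dif_pos h, Finset.sum_eq_single (⟨(a,b), h⟩ : {p : Fin m × Fin m // p.1 < p.2})]
    · simp [Fmat, Matrix.single, h.ne']
    · rintro ⟨⟨i,j⟩, hij⟩ - hne
      have : ¬(i = a ∧ j = b) := by
        rintro ⟨rfl, rfl⟩; exact hne rfl
      have h2 : ¬(j = a ∧ i = b) := by
        rintro ⟨rfl, rfl⟩; exact absurd hij (asymm h)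
      simp [Fmat, Matrix.single, this, h2]
    · simp
  · subst h
    rw [dif_neg (lt_irrefl a), dif_neg (lt_irrefl a)]
    refine Finset.sum_eq_zero ?_
    rintro ⟨⟨i,j⟩, hij⟩ -
    have : ¬(i = a ∧ j = a) := by rintro ⟨rfl, rfl⟩; exact absurd hij (lt_irrefl _)
    have h2 : ¬(j = a ∧ i = a) := by rintro ⟨rfl, rfl⟩; exact absurd hij (lt_irrefl _)
    simp [Fmat, Matrix.single, this, h2]
  · rw [dif_neg (asymm h), dif_pos h,
      Finset.sum_eq_single (⟨(b,a), h⟩ : {p : Fin m × Fin m // p.1 < p.2})]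
    · simp [Fmat, Matrix.single, h.ne']
    · rintro ⟨⟨i,j⟩, hij⟩ - hne
      have : ¬(i = a ∧ j = b) := by
        rintro ⟨rfl, rfl⟩; exact absurd hij (asymm h)
      have h2 : ¬(j = a ∧ i = b) := by
        rintro ⟨rfl, rfl⟩; exact hne rfl
      simp [Fmat, Matrix.single, this, h2]
    · simp

private lemma repr_sum (M : Matrix (Fin m) (Fin m) ℝ) (hs : M.IsSymm) (hd : ∀ i, M i i = 0) :
    M = ∑ p : {p : Fin m × Fin m // p.1 < p.2}, M p.1.1 p.1.2 • Fmat p := by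
  ext a b
  rw [eval_sum (f := fun p => M p.1.1 p.1.2)]
  rcases lt_trichotomy a b with h | h | h
  · rw [dif_pos h]
  · subst h; rw [dif_neg (lt_irrefl a), dif_neg (lt_irrefl a), hd]
  · rw [dif_neg (asymm h), dif_pos h]
    have := congrFun (congrFun hs b) a
    rw [Matrix.transpose_apply] at this
    exact this

private def Wsub (m : ℕ) : Submodule ℝ (Matrix (Fin m) (Fin m) ℝ) where
  carrier := {M | M.IsSymm ∧ ∀ i, M i i = 0}
  add_mem' := by
    rintro a b ⟨ha, ha'⟩ ⟨hb, hb'⟩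
    exact ⟨ha.add hb, fun i => by simp [Matrix.add_apply, ha' i, hb' i]⟩
  zero_mem' := ⟨Matrix.isSymm_zero, fun i => rfl⟩
  smul_mem' := by
    rintro c a ⟨ha, ha'⟩
    refine ⟨ha.smul c, fun i => by simp [ha' i]⟩

private lemma Fmat_mem_W (p : {p : Fin m × Fin m // p.1 < p.2}) : Fmat p ∈ Wsub m := by
  constructor
  · ext a b
    simp only [Matrix.transpose_apply, Fmat, Matrix.add_apply]
    simp [Matrix.single, and_comm]
    ring
  · intro i
    simp only [Fmat, Matrix.add_apply]
    have : ¬(p.1.1 = i ∧ p.1.2 = i) := by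
      rintro ⟨h1, h2⟩; have := p.2; rw [h1, h2] at this; exact absurd this (lt_irrefl i)
    have h2 : ¬(p.1.2 = i ∧ p.1.1 = i) := fun h => this ⟨h.2, h.1⟩
    simp [Matrix.single, this, h2]

private noncomputable def Wequiv : Wsub m ≃ₗ[ℝ] ({p : Fin m × Fin m // p.1 < p.2} → ℝ) where
  toFun M := fun p => (M : Matrix (Fin m) (Fin m) ℝ) p.1.1 p.1.2
  map_add' M N := rfl
  map_smul' c M := rfl
  invFun f := ⟨∑ p, f p • Fmat p, Submodule.sum_mem _ fun p _ =>
    Submodule.smul_mem _ _ (Fmat_mem_W p)⟩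
  left_inv M := by
    ext1
    exact (repr_sum (M : Matrix (Fin m) (Fin m) ℝ) M.2.1 M.2.2).symm
  right_inv f := by
    funext p
    show (∑ q, f q • Fmat q) p.1.1 p.1.2 = f p
    rw [eval_sum, dif_pos p.2]

private lemma finrank_W : Module.finrank ℝ (Wsub m) = m * (m - 1) / 2 := by
  rw [(Wequiv (m := m)).finrank_eq, Module.finrank_pi]
  have e : {p : Fin m × Fin m // p.1 < p.2} ≃ ((j : Fin m) × Fin j.val) :=
    { toFun := fun p => ⟨p.1.2, ⟨p.1.1, p.2⟩⟩
      invFun := fun q => ⟨(⟨q.2, q.2.isLt.trans q.1.isLt⟩, q.1), q.2.isLt⟩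
      left_inv := fun p => by rcases p with ⟨⟨i, j⟩, h⟩; rfl
      right_inv := fun q => by rcases q with ⟨j, k⟩; rfl }
  rw [Fintype.card_congr e, Fintype.card_sigma]
  simp only [Fintype.card_fin]
  rw [Fin.sum_univ_eq_sum_range (fun i => i) m, Finset.sum_range_id]


private def sgn1 (i : Fin m) : Fin m → ℝ := fun k => if k = i then -1 else 1
private def sgn2 (i j : Fin m) : Fin m → ℝ := fun k => if k = i ∨ k = j then -1 else 1

private lemma key_identity (i j : Fin m) (hij : i ≠ j) :
    Matrix.single i j (1:ℝ) + Matrix.single j i 1 =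
      (4⁻¹ : ℝ) • ((vecMulVec (fun _ => (1:ℝ)) (fun _ => 1) - vecMulVec (sgn1 i) (sgn1 i)) +
        (vecMulVec (sgn2 i j) (sgn2 i j) - vecMulVec (sgn1 j) (sgn1 j))) := by
  ext a b
  simp only [Matrix.add_apply, Matrix.sub_apply, Matrix.smul_apply, vecMulVec_apply,
    Matrix.single, of_apply, sgn1, sgn2, smul_eq_mul]
  by_cases hai : a = i <;> by_cases haj : a = j <;> by_cases hbi : b = i <;>
    by_cases hbj : b = j <;> simp_all [eq_comm] <;> norm_num

private def Scut (m : ℕ) : Set (Matrix (Fin m) (Fin m) ℝ) :=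
  {M | ∃ α : Fin m → ℝ, (∀ i, α i = 1 ∨ α i = -1) ∧ M = vecMulVec α α}

private lemma one_mem_S : vecMulVec (fun _ => (1:ℝ)) (fun _ => 1) ∈ Scut m :=
  ⟨fun _ => 1, fun _ => Or.inl rfl, rfl⟩

private lemma sgn1_mem_S (i : Fin m) : vecMulVec (sgn1 i) (sgn1 i) ∈ Scut m :=
  ⟨sgn1 i, fun k => by unfold sgn1; split_ifs <;> simp, rfl⟩

private lemma sgn2_mem_S (i j : Fin m) : vecMulVec (sgn2 i j) (sgn2 i j) ∈ Scut m :=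
  ⟨sgn2 i j, fun k => by unfold sgn2; split_ifs <;> simp, rfl⟩

private lemma Fmat_mem_vectorSpan (p : {p : Fin m × Fin m // p.1 < p.2}) :
    Fmat p ∈ vectorSpan ℝ (Scut m) := by
  have hij : p.1.1 ≠ p.1.2 := ne_of_lt p.2
  have h1 : vecMulVec (fun _ => (1:ℝ)) (fun _ => 1) - vecMulVec (sgn1 p.1.1) (sgn1 p.1.1)
      ∈ vectorSpan ℝ (Scut m) := by
    have := vsub_mem_vectorSpan ℝ (one_mem_S (m := m)) (sgn1_mem_S p.1.1)
    rwa [vsub_eq_sub] at this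
  have h2 : vecMulVec (sgn2 p.1.1 p.1.2) (sgn2 p.1.1 p.1.2) - vecMulVec (sgn1 p.1.2) (sgn1 p.1.2)
      ∈ vectorSpan ℝ (Scut m) := by
    have := vsub_mem_vectorSpan ℝ (sgn2_mem_S p.1.1 p.1.2) (sgn1_mem_S p.1.2)
    rwa [vsub_eq_sub] at this
  rw [show Fmat p = Matrix.single p.1.1 p.1.2 (1:ℝ) + Matrix.single p.1.2 p.1.1 1 from rfl,
    key_identity p.1.1 p.1.2 hij]
  exact Submodule.smul_mem _ _ (Submodule.add_mem _ h1 h2)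

private lemma S_subset_mk' :
    Scut m ⊆ (AffineSubspace.mk' (vecMulVec (fun _ => (1:ℝ)) (fun _ => 1)) (Wsub m) : Set _) := by
  rintro M ⟨α, hα, rfl⟩
  rw [SetLike.mem_coe, AffineSubspace.mem_mk']
  constructor
  · ext a b
    simp [vecMulVec_apply, mul_comm]
  · intro i
    rcases hα i with h | h <;> simp [vecMulVec_apply, h]

private lemma span_eq_mk' :
    affineSpan ℝ (Scut m) =
      AffineSubspace.mk' (vecMulVec (fun _ => (1:ℝ)) (fun _ => 1)) (Wsub m) := by
  refine le_antisymm ((affineSpan_le).mpr S_subset_mk') ?_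
  intro x hx
  rw [AffineSubspace.mem_mk'] at hx
  have hW : Wsub m ≤ (affineSpan ℝ (Scut m)).direction := by
    rw [direction_affineSpan]
    intro M hM
    rw [repr_sum M hM.1 hM.2]
    exact Submodule.sum_mem _ fun p _ => Submodule.smul_mem _ _ (Fmat_mem_vectorSpan p)
  have : x = (x -ᵥ vecMulVec (fun _ => (1:ℝ)) (fun _ => 1)) +ᵥ
      vecMulVec (fun _ => (1:ℝ)) (fun _ => 1) := by simp
  rw [this]
  exact AffineSubspace.vadd_mem_of_mem_direction (hW hx)
    (subset_affineSpan ℝ _ (one_mem_S (m := m)))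

/-- The affine span of `{ααᵀ : α ∈ {±1}^m}` is exactly the set of real
symmetric matrices with unit diagonal; its dimension is `m(m-1)/2`. -/
theorem stmt8 (m : ℕ) :
    (affineSpan ℝ {M : Matrix (Fin m) (Fin m) ℝ |
        ∃ α : Fin m → ℝ, (∀ i, α i = 1 ∨ α i = -1) ∧ M = vecMulVec α α} : Set _)
      = {M : Matrix (Fin m) (Fin m) ℝ | M.IsSymm ∧ ∀ i, M i i = 1} ∧
    Module.finrank ℝ (affineSpan ℝ {M : Matrix (Fin m) (Fin m) ℝ |
        ∃ α : Fin m → ℝ, (∀ i, α i = 1 ∨ α i = -1) ∧ M = vecMulVec α α}).direction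
      = m * (m - 1) / 2 := by
  have hset : {M : Matrix (Fin m) (Fin m) ℝ |
      ∃ α : Fin m → ℝ, (∀ i, α i = 1 ∨ α i = -1) ∧ M = vecMulVec α α} = Scut m := rfl
  constructor
  · rw [hset, span_eq_mk']
    ext M
    rw [SetLike.mem_coe, AffineSubspace.mem_mk']
    rw [vsub_eq_sub]
    have h1 : (vecMulVec (fun _ => (1:ℝ)) (fun _ => 1) : Matrix (Fin m) (Fin m) ℝ).IsSymm := by
      ext a b; simp [vecMulVec_apply]
    constructor
    · rintro ⟨hs, hd⟩
      refine ⟨?_, fun i => ?_⟩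
      · have h2 := hs.add h1
        rwa [sub_add_cancel] at h2
      · have := hd i
        simp only [Matrix.sub_apply, vecMulVec_apply, mul_one] at this
        linarith [this]
    · rintro ⟨hs, hd⟩
      exact ⟨hs.sub h1, fun i => by simp [Matrix.sub_apply, vecMulVec_apply, hd i]⟩
  · rw [hset, span_eq_mk', AffineSubspace.direction_mk']
    exact finrank_W
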